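/- Let C ≥ 1 be a natural number and S_1, …, S_N pairwise disjoint finite sets with N ≥ 2^(8C) and |S_j| ≥ 8C for every j ≤ N; put S = S_1 ∪ … ∪ S_N. Consider the following ω-length alternating game between Alice and Bob: each element s ∈ S carries rational weights A(s) ≥ 0 (Alice's) and B(s) ≥ 0 (Bob's), all initially 0; on each of her moves Alice may increase her weights on finitely many elements, and on each of his moves Bob may increase his weights on finitely many elements and may irreversibly disable some elements. At all times the totals must satisfy Σ_{s∈S} A(s) ≤ 1 and Σ_{s∈S} B(s) ≤ 1; Bob must be fair, i.e., at all times all elements of the same S_j carry equal Bob-weight; and Bob may never have disabled all elements of any S_j. Alice wins if in the limit position there exists a non-disabled s ∈ S with A(s) ≥ C·B(s). Then Alice has a winning strategy (moreover a computable one, uniformly in the parameters). -/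

import Mathlib

open scoped BigOperators

/-- A state of Bob: his current weight function together with his current set of disabled
elements. -/
abbrev BobState (α : Type) := (α → ℚ) × Set α

/-- A strategy for Alice: her new (cumulative) weight function as a function of the list
of Bob's previous states. -/
abbrev AStrat (α : Type) := List (BobState α) → (α → ℚ)

/-- A strategy for Bob: his new state as a function of the list of Alice's weight
functions so far (including the one of the current round, since Alice moves first). -/
abbrev BStrat (α : Type) := List (α → ℚ) → BobState α

/-- The history of the first `k` rounds of the play `σ` versus `τ` (Alice moves first in
each round). -/
def ghist {α : Type} (σ : AStrat α) (τ : BStrat α) : ℕ → List ((α → ℚ) × BobState α)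
  | 0 => []
  | k + 1 =>
    let h := ghist σ τ k
    let am := σ (h.map Prod.snd)
    let bm := τ (h.map Prod.fst ++ [am])
    h ++ [(am, bm)]

/-- Alice's weight function after her move of round `k`. -/
def amove {α : Type} (σ : AStrat α) (τ : BStrat α) (k : ℕ) : α → ℚ :=
  σ ((ghist σ τ k).map Prod.snd)

/-- Bob's state after his move of round `k`. -/
def bmove {α : Type} (σ : AStrat α) (τ : BStrat α) (k : ℕ) : BobState α :=
  τ ((ghist σ τ k).map Prod.fst ++ [amove σ τ k])

/-- The union of the sets `S j`. -/
def SU {α : Type} [DecidableEq α] {N : ℕ} (S : Fin N → Finset α) : Finset α :=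
  Finset.univ.biUnion S

/-- Alice's move of round `k` is legal: her weights only increase, only finitely many of
them change, they are supported on `S = ⋃ j, S j`, and their total is at most `1`.
(Since the weights start at `0` and only increase, they are automatically nonnegative.) -/
def AliceLegal {α : Type} [DecidableEq α] {N : ℕ} (S : Fin N → Finset α)
    (A : ℕ → α → ℚ) (k : ℕ) : Prop :=
  let prev : α → ℚ := if k = 0 then 0 else A (k - 1)
  (∀ s, prev s ≤ A k s) ∧
  {s | A k s ≠ prev s}.Finite ∧
  (∀ s, s ∉ SU S → A k s = 0) ∧
  (∑ s ∈ SU S, A k s) ≤ 1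

/-- Bob's move of round `k` is legal: his weights only increase and are supported on
`S = ⋃ j, S j` with total at most `1`; he is fair (all elements of the same `S j` carry
equal weight); disabling is irreversible; and in no `S j` are all elements disabled. -/
def BobLegal {α : Type} [DecidableEq α] {N : ℕ} (S : Fin N → Finset α)
    (B : ℕ → α → ℚ) (D : ℕ → Set α) (k : ℕ) : Prop :=
  let prev : α → ℚ := if k = 0 then 0 else B (k - 1)
  let prevD : Set α := if k = 0 then ∅ else D (k - 1)
  (∀ s, prev s ≤ B k s) ∧
  (∀ s, s ∉ SU S → B k s = 0) ∧
  (∑ s ∈ SU S, B k s) ≤ 1 ∧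
  (∀ j : Fin N, ∀ s ∈ S j, ∀ t ∈ S j, B k s = B k t) ∧
  prevD ⊆ D k ∧
  (∀ j : Fin N, ∃ s ∈ S j, s ∉ D k)

/-- Alice wins in the limit: some element `s` that is never disabled satisfies
`A(s) ≥ C·B(s)` for the limit weights `A(s) = sup_k A_k(s)` and `B(s) = sup_k B_k(s)`. -/
def AliceLimitWin {α : Type} (C : ℕ) (A B : ℕ → α → ℚ) (D : ℕ → Set α) : Prop :=
  ∃ s : α, (∀ k, s ∉ D k) ∧
    (C : ℝ) * (⨆ k, ((B k s : ℝ))) ≤ ⨆ k, ((A k s : ℝ))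

/-- Alice wins the play `σ` versus `τ`: either Bob is the first to break a rule (at some
round `k`, Alice having played legally at all her moves up to and including round `k`),
or both play legally forever and Alice wins in the limit. -/
def AliceWins {α : Type} [DecidableEq α] {N : ℕ} (C : ℕ) (S : Fin N → Finset α)
    (σ : AStrat α) (τ : BStrat α) : Prop :=
  let A : ℕ → α → ℚ := amove σ τ
  let B : ℕ → α → ℚ := fun k => (bmove σ τ k).1
  let D : ℕ → Set α := fun k => (bmove σ τ k).2
  (∃ k : ℕ, ¬ BobLegal S B D k ∧ ∀ j ≤ k, AliceLegal S A j) ∨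
  ((∀ k, AliceLegal S A k ∧ BobLegal S B D k) ∧ AliceLimitWin C A B D)

namespace Stmt16

/-- plateau length -/
def qq (c m : ℕ) : ℕ := (m + c - 1) / c

/-- the stake of the `i`-th attempt in a set of size `m` -/
def stk (c m i : ℕ) : ℚ := ((c : ℚ) / (m : ℚ)) * 2 ^ (i / qq c m) / 2 ^ (c + 2)

lemma qq_pos {c m : ℕ} (hc : 0 < c) (hm : c ≤ m) : 0 < qq c m := by
  have h : c ≤ m + c - 1 := by omega
  exact Nat.div_pos h hc

lemma le_mul_qq {c m : ℕ} (hc : 0 < c) (hm : c ≤ m) : m ≤ c * qq c m := by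
  have h := Nat.div_add_mod (m + c - 1) c
  have h2 := Nat.mod_lt (m + c - 1) hc
  unfold qq
  omega

lemma mul_qq_le {c m : ℕ} (hc : 0 < c) (hm : c ≤ m) : c * qq c m ≤ 2 * m := by
  have h := Nat.div_add_mod (m + c - 1) c
  unfold qq
  omega

lemma stk_pos {c m : ℕ} (hc : 0 < c) (hm : 0 < m) (i : ℕ) : 0 < stk c m i := by
  unfold stk
  positivity

lemma stk_nonneg {c m : ℕ} (i : ℕ) : 0 ≤ stk c m i := by
  unfold stk
  positivity

lemma blocksum {q : ℕ} (hq : 0 < q) (t : ℕ) :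
    ∑ i ∈ Finset.range (q * t), (2:ℚ) ^ (i / q) = q * (2 ^ t - 1) := by
  induction t with
  | zero => simp
  | succ t ih =>
      have hmul : q * (t+1) = q*t + q := by ring
      rw [hmul, Finset.range_eq_Ico, ← Finset.sum_Ico_consecutive _ (Nat.zero_le (q*t)) (by omega),
        ← Finset.range_eq_Ico, ih]
      have hblock : ∀ i ∈ Finset.Ico (q*t) (q*t+q), (2:ℚ) ^ (i / q) = 2 ^ t := by
        intro i hi
        rw [Finset.mem_Ico] at hi
        congr 1
        have : i / q = t := by
          apply Nat.div_eq_of_lt_le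
          · have e1 : t * q = q * t := by ring
            omega
          · have e2 : Nat.succ t * q = q * t + q := by rw [Nat.succ_mul]; ring
            have e3 : (t+1) * q = q * t + q := by ring
            omega
        rw [this]
      rw [Finset.sum_congr rfl hblock, Finset.sum_const, Nat.card_Ico]
      have : q * t + q - q * t = q := by omega
      rw [this]
      push_cast
      ring

lemma prefix_le {q n : ℕ} (hq : 0 < q) (hn : 0 < n) :
    ∑ i ∈ Finset.range n, (2:ℚ) ^ (i / q) ≤ 2 * q * 2 ^ ((n-1) / q) := by
  have hsub : n ≤ q * ((n-1)/q + 1) := by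
    have h := Nat.div_add_mod (n-1) q
    have h2 := Nat.mod_lt (n-1) hq
    have h3 : q * ((n-1)/q + 1) = q * ((n-1)/q) + q := by ring
    omega
  set L := (n-1)/q with hL
  have h1 : ∑ i ∈ Finset.range n, (2:ℚ) ^ (i / q) ≤
      ∑ i ∈ Finset.range (q * (L+1)), (2:ℚ) ^ (i / q) := by
    apply Finset.sum_le_sum_of_subset_of_nonneg
    · exact Finset.range_subset_range.mpr hsub
    · intro i _ _; positivity
  have h2 := blocksum hq (L+1)
  rw [h2] at h1
  have hqpos : (0:ℚ) ≤ (q:ℚ) := by positivity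
  have hpow : (0:ℚ) < 2 ^ L := by positivity
  calc ∑ i ∈ Finset.range n, (2:ℚ) ^ (i / q) ≤ q * (2 ^ (L+1) - 1) := h1
    _ ≤ 2 * q * 2 ^ L := by
        rw [pow_succ]
        nlinarith

lemma sum_stk_le {c m n : ℕ} (hc : 0 < c) (hm : c ≤ m) (hn : 0 < n) :
    ∑ i ∈ Finset.range n, stk c m i ≤ 4 * 2 ^ ((n-1) / qq c m) / 2 ^ (c + 2) := by
  have hq := qq_pos hc hm
  have hp := prefix_le hq hn (q := qq c m)
  have hm0 : (0:ℚ) < (m:ℚ) := by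
    have : 0 < m := lt_of_lt_of_le hc hm
    exact_mod_cast this
  have key : ∑ i ∈ Finset.range n, stk c m i
      = ((c:ℚ)/(m:ℚ)) / 2 ^ (c+2) * ∑ i ∈ Finset.range n, (2:ℚ) ^ (i / qq c m) := by
    rw [Finset.mul_sum]
    apply Finset.sum_congr rfl
    intro i _
    unfold stk
    ring
  rw [key]
  have hcq : (c:ℚ) * (qq c m : ℚ) ≤ 2 * (m:ℚ) := by exact_mod_cast mul_qq_le hc hm
  have hX : (0:ℚ) < 2 ^ ((n-1) / qq c m) := by positivity
  have hP : (0:ℚ) < (2:ℚ) ^ (c+2) := by positivity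
  calc ((c:ℚ)/(m:ℚ)) / 2 ^ (c+2) * ∑ i ∈ Finset.range n, (2:ℚ) ^ (i / qq c m)
      ≤ ((c:ℚ)/(m:ℚ)) / 2 ^ (c+2) * (2 * (qq c m : ℚ) * 2 ^ ((n-1) / qq c m)) := by
        apply mul_le_mul_of_nonneg_left hp (by positivity)
    _ ≤ 4 * 2 ^ ((n-1) / qq c m) / 2 ^ (c+2) := by
        rw [div_div, div_mul_eq_mul_div, div_le_div_iff₀ (by positivity) (by positivity)]
        have hint := mul_le_mul_of_nonneg_right hcq
          (le_of_lt (mul_pos hX hP))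
        nlinarith [hint]

lemma lvl_cap {c m n : ℕ} (hc : 0 < c) (hm : c ≤ m) (hn : n ≤ m) :
    (n-1) / qq c m ≤ c - 1 := by
  have hq := qq_pos hc hm
  have h := le_mul_qq hc hm
  have hlt : (n-1) / qq c m < c := by
    rw [Nat.div_lt_iff_lt_mul hq]
    omega
  omega

lemma cap_half {c : ℕ} (hc : 8 ≤ c) : 4 * (2:ℚ) ^ (c-1) / 2 ^ (c+2) = 1/2 := by
  have h : c + 2 = (c-1) + 3 := by omega
  rw [h, pow_add]
  have h2 : (2:ℚ) ^ (c-1) ≠ 0 := by positivity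
  field_simp
  ring

lemma stk_ge {c m : ℕ} (i : ℕ) : ((c:ℚ)/(m:ℚ)) / 2 ^ (c+2) ≤ stk c m i := by
  unfold stk
  rw [div_le_div_iff₀ (by positivity) (by positivity)]
  have h1 : (1:ℚ) ≤ 2 ^ (i / qq c m) := one_le_pow₀ (by norm_num)
  have h2 : (0:ℚ) ≤ (c:ℚ)/(m:ℚ) := by positivity
  have h3 : (0:ℚ) < (2:ℚ) ^ (c+2) := by positivity
  nlinarith [mul_le_mul_of_nonneg_left h1 h2]


/-! ### The strategy -/

variable {α : Type} [DecidableEq α] {N : ℕ}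

/-- Alice's bookkeeping state: her cumulative weights plus, for each set, the list of
elements she has staked so far (in order). -/
structure GSt (α : Type) (N : ℕ) where
  A : α → ℚ
  att : Fin N → List α

/-- `S j` is finished: Bob's weight there beats the stake of Alice's latest attempt. -/
def finP (C : ℕ) (S : Fin N → Finset α) (st : GSt α N) (bob : BobState α) (j : Fin N) : Prop :=
  ((S j).card : ℚ) * stk (8*C) ((S j).card) ((st.att j).length - 1) <
    (C:ℚ) * ∑ s ∈ S j, bob.1 s

open scoped Classical in
/-- The unfinished sets. -/
noncomputable def Tset (C : ℕ) (S : Fin N → Finset α) (st : GSt α N) (bob : BobState α) :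
    Finset (Fin N) :=
  Finset.univ.filter (fun j => ¬ finP C S st bob j)

open scoped Classical in
/-- Alice's action inside the set `S j`. -/
noncomputable def stepGo (C : ℕ) (S : Fin N → Finset α) (st : GSt α N) (bob : BobState α)
    (j : Fin N) : GSt α N :=
  if ∃ s ∈ st.att j, s ∉ bob.2 then st
  else if h2 : ∃ s, s ∈ S j ∧ s ∉ bob.2 ∧ s ∉ st.att j then
    ⟨Function.update st.A h2.choose (stk (8*C) ((S j).card) ((st.att j).length)),
     Function.update st.att j (st.att j ++ [h2.choose])⟩
  else st

/-- One step of Alice's strategy. -/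
noncomputable def stepF (C : ℕ) (S : Fin N → Finset α) (st : GSt α N) (bob : BobState α) :
    GSt α N :=
  if hT : (Tset C S st bob).Nonempty then
    stepGo C S st bob ((Tset C S st bob).min' hT)
  else st

/-- The initial state. -/
def st0 (α : Type) (N : ℕ) : GSt α N := ⟨fun _ => 0, fun _ => []⟩

/-- Alice's strategy. -/
noncomputable def alice (C : ℕ) (S : Fin N → Finset α) : AStrat α :=
  fun l => (List.foldl (stepF C S) (st0 α N) (((fun _ => (0:ℚ)), (∅ : Set α)) :: l)).A

lemma finP_congr (C : ℕ) (S : Fin N → Finset α) {st st' : GSt α N} (bob : BobState α)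
    (j : Fin N) (h : (st.att j).length = (st'.att j).length) :
    finP C S st bob j ↔ finP C S st' bob j := by
  unfold finP
  rw [h]

lemma finP_mono (C : ℕ) (S : Fin N → Finset α) (st : GSt α N) {bob bob' : BobState α}
    (hB : ∀ s, bob.1 s ≤ bob'.1 s) {j : Fin N} (hf : finP C S st bob j) :
    finP C S st bob' j := by
  unfold finP at *
  refine lt_of_lt_of_le hf ?_
  apply mul_le_mul_of_nonneg_left _ (by positivity)
  exact Finset.sum_le_sum (fun s _ => hB s)

lemma min'_not_finP (C : ℕ) (S : Fin N → Finset α) (st : GSt α N) (bob : BobState α)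
    (hT : (Tset C S st bob).Nonempty) :
    ¬ finP C S st bob ((Tset C S st bob).min' hT) := by
  classical
  have := (Tset C S st bob).min'_mem hT
  unfold Tset at this
  exact (Finset.mem_filter.mp this).2

lemma lt_min'_finP (C : ℕ) (S : Fin N → Finset α) (st : GSt α N) (bob : BobState α)
    (hT : (Tset C S st bob).Nonempty) {j' : Fin N}
    (hlt : j' < (Tset C S st bob).min' hT) : finP C S st bob j' := by
  classical
  by_contra hf
  have hmem : j' ∈ Tset C S st bob := by
    unfold Tset
    simp [hf]
  exact absurd (Finset.min'_le _ _ hmem) (not_le.mpr hlt)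

/-- Case analysis for one step. -/
lemma step_cases (C : ℕ) (S : Fin N → Finset α) (st : GSt α N) (bob : BobState α) :
    stepF C S st bob = st ∨
    ∃ (j : Fin N) (s₀ : α), ¬ finP C S st bob j ∧ (∀ j' : Fin N, j' < j → finP C S st bob j') ∧
      (∀ s ∈ st.att j, s ∈ bob.2) ∧ s₀ ∈ S j ∧ s₀ ∉ bob.2 ∧ s₀ ∉ st.att j ∧
      stepF C S st bob = ⟨Function.update st.A s₀ (stk (8*C) ((S j).card) ((st.att j).length)),
        Function.update st.att j (st.att j ++ [s₀])⟩ := by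
  classical
  unfold stepF
  split
  case isFalse => exact Or.inl rfl
  case isTrue hT =>
    set j := (Tset C S st bob).min' hT with hj
    unfold stepGo
    split
    case isTrue => exact Or.inl rfl
    case isFalse hkeep =>
      split
      case isFalse => exact Or.inl rfl
      case isTrue h2 =>
        right
        refine ⟨j, h2.choose, min'_not_finP C S st bob hT,
          fun j' hlt => lt_min'_finP C S st bob hT hlt, ?_, ?_, ?_, ?_, rfl⟩
        · intro s hs
          by_contra hdead
          exact hkeep ⟨s, hs, hdead⟩
        · exact h2.choose_spec.1
        · exact h2.choose_spec.2.1
        · exact h2.choose_spec.2.2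

/-- If the step leaves the state unchanged, Bob is legal-ish and some set is unfinished,
then Alice's current attempt in the least unfinished set is alive. -/
lemma step_keep (C : ℕ) (S : Fin N → Finset α) (st : GSt α N) (bob : BobState α)
    (hT : (Tset C S st bob).Nonempty)
    (halive : ∀ j : Fin N, ∃ s ∈ S j, s ∉ bob.2)
    (heq : stepF C S st bob = st) :
    ∃ s ∈ st.att ((Tset C S st bob).min' hT), s ∉ bob.2 := by
  classical
  by_contra hkeep
  set j := (Tset C S st bob).min' hT with hj
  have hstep : stepF C S st bob = stepGo C S st bob j := by
    unfold stepF
    rw [dif_pos hT]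
  obtain ⟨s, hsS, hsD⟩ := halive j
  have hsatt : s ∉ st.att j := by
    intro hmem
    exact hkeep ⟨s, hmem, hsD⟩
  have h2 : ∃ s, s ∈ S j ∧ s ∉ bob.2 ∧ s ∉ st.att j := ⟨s, hsS, hsD, hsatt⟩
  have : stepGo C S st bob j =
      ⟨Function.update st.A h2.choose (stk (8*C) ((S j).card) ((st.att j).length)),
       Function.update st.att j (st.att j ++ [h2.choose])⟩ := by
    unfold stepGo
    rw [if_neg hkeep, dif_pos h2]
  rw [hstep, this] at heq
  have hlen := congrArg (fun st : GSt α N => (st.att j).length) heq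
  simp at hlen


/-! ### The invariant -/

structure Inv (C : ℕ) (S : Fin N → Finset α) (st : GSt α N) (bob : BobState α) : Prop where
  nod : ∀ j, (st.att j).Nodup
  mem : ∀ j, ∀ s ∈ st.att j, s ∈ S j
  coupM : ∀ j, (st.att j).map st.A
    = (List.range (st.att j).length).map (fun i => stk (8*C) ((S j).card) i)
  coupZ : ∀ s, (∀ j, s ∉ st.att j) → st.A s = 0
  dead : ∀ j, ∀ s ∈ (st.att j).dropLast, s ∈ bob.2
  ord : ∀ j, st.att j ≠ [] → ∀ j' : Fin N, j' < j → finP C S st bob j'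

variable {C : ℕ} {S : Fin N → Finset α}

lemma coupL_of_coupM {β : Type} {l : List β} {A : β → ℚ} {f : ℕ → ℚ}
    (h : l.map A = (List.range l.length).map f) (hne : l ≠ []) :
    A (l.getLast hne) = f (l.length - 1) := by
  have h2 := congrArg List.getLast? h
  rw [List.getLast?_map, List.getLast?_map] at h2
  have h3 : l.getLast? = some (l.getLast hne) := List.getLast?_eq_getLast hne
  have h5 : 0 < l.length := List.length_pos_iff.mpr hne
  have h4 : (List.range l.length).getLast? = some (l.length - 1) := by
    have : l.length = (l.length - 1) + 1 := by omega
    rw [this, List.range_succ]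
    simp
  rw [h3, h4] at h2
  simpa using h2

lemma inv_coupL {st : GSt α N} {bob : BobState α} (hI : Inv C S st bob) (j : Fin N)
    (hne : st.att j ≠ []) :
    st.A ((st.att j).getLast hne) = stk (8*C) ((S j).card) ((st.att j).length - 1) :=
  coupL_of_coupM (hI.coupM j) hne

lemma inv_st0 : Inv C S (st0 α N) ((fun _ => (0:ℚ)), (∅ : Set α)) := by
  constructor <;> simp [st0]

/-- an element staked in another set is not in `S j`. -/
lemma staked_other (hdisj : ∀ i j : Fin N, i ≠ j → Disjoint (S i) (S j))
    {st : GSt α N} {bob : BobState α} (hI : Inv C S st bob) {j : Fin N} {s₀ : α}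
    (hs₀S : s₀ ∈ S j) : ∀ j' : Fin N, j' ≠ j → s₀ ∉ st.att j' := by
  intro j' hne hmem
  exact (Finset.disjoint_left.mp (hdisj j' j hne) (hI.mem j' s₀ hmem)) hs₀S

lemma inv_step (hdisj : ∀ i j : Fin N, i ≠ j → Disjoint (S i) (S j))
    {st : GSt α N} {bob bob' : BobState α} (hI : Inv C S st bob)
    (hB : ∀ s, bob.1 s ≤ bob'.1 s) (hD : bob.2 ⊆ bob'.2) :
    Inv C S (stepF C S st bob') bob' := by
  rcases step_cases C S st bob' with heq | ⟨j, s₀, hnf, hord', hkeep, hs₀S, hs₀D, hs₀att, heq⟩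
  · rw [heq]
    exact ⟨hI.nod, hI.mem, hI.coupM, hI.coupZ,
      fun j s hs => hD (hI.dead j s hs),
      fun j hne j' hlt => finP_mono C S st hB (hI.ord j hne j' hlt)⟩
  · rw [heq]
    have hother := staked_other hdisj hI hs₀S
    have hAongr : ∀ j' : Fin N, ∀ s ∈ st.att j',
        Function.update st.A s₀ (stk (8*C) ((S j).card) ((st.att j).length)) s = st.A s := by
      intro j' s hs
      apply Function.update_of_ne
      intro hcontra
      rcases eq_or_ne j' j with rfl | hne
      · exact hs₀att (hcontra ▸ hs)
      · exact hother j' hne (hcontra ▸ hs)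
    constructor
    · -- nod
      intro j'
      rcases eq_or_ne j' j with rfl | hne
      · simp only [Function.update_self]
        simp [List.nodup_append, hI.nod j']
        exact fun x hx hxs => hs₀att (hxs ▸ hx)
      · simp only [Function.update_of_ne hne]
        exact hI.nod j'
    · -- mem
      intro j' s hs
      rcases eq_or_ne j' j with rfl | hne
      · simp only [Function.update_self] at hs
        rcases List.mem_append.mp hs with h | h
        · exact hI.mem j' s h
        · simp at h
          exact h ▸ hs₀S
      · simp only [Function.update_of_ne hne] at hs
        exact hI.mem j' s hs
    · -- coupM
      intro j'
      rcases eq_or_ne j' j with rfl | hne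
      · simp only [Function.update_self, List.map_append, List.length_append,
          List.length_singleton]
        rw [List.map_congr_left (hAongr j'), hI.coupM j']
        have hr : List.range ((st.att j').length + 1)
            = List.range (st.att j').length ++ [(st.att j').length] := by
          rw [List.range_succ]
        rw [hr, List.map_append]
        simp [Function.update_self]
      · simp only [Function.update_of_ne hne]
        rw [List.map_congr_left (hAongr j'), hI.coupM j']
    · -- coupZ
      intro s hs
      have hsj : s ∉ st.att j := by
        intro hmem
        apply hs j
        simp only [Function.update_self]
        exact List.mem_append.mpr (Or.inl hmem)
      have hne0 : s ≠ s₀ := by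
        intro rfl'
        apply hs j
        simp only [Function.update_self, rfl']
        simp
      show Function.update st.A s₀ (stk (8*C) ((S j).card) ((st.att j).length)) s = 0
      rw [Function.update_of_ne hne0]
      apply hI.coupZ
      intro j'
      rcases eq_or_ne j' j with rfl | hne
      · exact hsj
      · intro hmem
        apply hs j'
        simp only [Function.update_of_ne hne]
        exact hmem
    · -- dead
      intro j' s hs
      rcases eq_or_ne j' j with rfl | hne
      · simp only [Function.update_self, List.dropLast_concat] at hs
        exact hkeep s hs
      · simp only [Function.update_of_ne hne] at hs
        exact hD (hI.dead j' s hs)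
    · -- ord
      intro j₂ hne₂ j' hlt
      have hlen : ∀ jj : Fin N, jj ≠ j →
          ((⟨Function.update st.A s₀ (stk (8*C) ((S j).card) ((st.att j).length)),
            Function.update st.att j (st.att j ++ [s₀])⟩ : GSt α N).att jj).length
          = (st.att jj).length := by
        intro jj hne
        simp [Function.update_of_ne hne]
      rcases eq_or_ne j₂ j with rfl | hne₂j
      · -- j₂ = j : j' < j, use hord'
        have hj' : j' ≠ j₂ := ne_of_lt hlt
        rw [← finP_congr C S _ j' (hlen j' hj').symm]
        exact hord' j' hlt
      · -- j₂ ≠ j was staked before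
        have hne₂' : st.att j₂ ≠ [] := by
          simp only [Function.update_of_ne hne₂j] at hne₂
          exact hne₂
        rcases eq_or_ne j' j with rfl | hne'j
        · exfalso
          exact hnf (finP_mono C S st hB (hI.ord j₂ hne₂' j' hlt))
        · rw [← finP_congr C S _ j' (hlen j' hne'j).symm]
          exact finP_mono C S st hB (hI.ord j₂ hne₂' j' hlt)

lemma stepA_mono (hdisj : ∀ i j : Fin N, i ≠ j → Disjoint (S i) (S j))
    {st : GSt α N} {bob bob' : BobState α} (hI : Inv C S st bob) :
    ∀ s, st.A s ≤ (stepF C S st bob').A s := by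
  rcases step_cases C S st bob' with heq | ⟨j, s₀, _, _, _, hs₀S, _, hs₀att, heq⟩
  · rw [heq]
    exact fun s => le_refl _
  · rw [heq]
    intro s
    rcases eq_or_ne s s₀ with rfl | hne
    · have h0 : st.A s = 0 := by
        apply hI.coupZ
        intro j'
        rcases eq_or_ne j' j with rfl | hne'
        · exact hs₀att
        · exact staked_other hdisj hI hs₀S j' hne'
      simp only [h0, Function.update_self]
      exact stk_nonneg _
    · show st.A s ≤ Function.update st.A s₀ _ s
      rw [Function.update_of_ne hne]

lemma stepA_diff {st : GSt α N} {bob' : BobState α} :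
    {s | (stepF C S st bob').A s ≠ st.A s}.Finite := by
  rcases step_cases C S st bob' with heq | ⟨j, s₀, _, _, _, _, _, _, heq⟩
  · rw [heq]
    simp
  · rw [heq]
    apply Set.Finite.subset (Set.finite_singleton s₀)
    intro s hs
    simp only [Set.mem_setOf_eq] at hs
    by_contra hne
    exact hs (Function.update_of_ne hne _ _)

lemma inv_support {st : GSt α N} {bob : BobState α} (hI : Inv C S st bob) :
    ∀ s, s ∉ SU S → st.A s = 0 := by
  intro s hs
  apply hI.coupZ
  intro j hmem
  exact hs (Finset.mem_biUnion.mpr ⟨j, Finset.mem_univ j, hI.mem j s hmem⟩)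

lemma inv_len_le {st : GSt α N} {bob : BobState α} (hI : Inv C S st bob) (j : Fin N) :
    (st.att j).length ≤ (S j).card := by
  rw [← List.toFinset_card_of_nodup (hI.nod j)]
  apply Finset.card_le_card
  intro s hs
  exact hI.mem j s (List.mem_toFinset.mp hs)

lemma inv_SA_eq {st : GSt α N} {bob : BobState α}
    (hdisj : ∀ i j : Fin N, i ≠ j → Disjoint (S i) (S j)) (hI : Inv C S st bob) (j : Fin N) :
    ∑ s ∈ S j, st.A s = ∑ i ∈ Finset.range (st.att j).length, stk (8*C) ((S j).card) i := by
  have hsub : (st.att j).toFinset ⊆ S j := by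
    intro s hs
    exact hI.mem j s (List.mem_toFinset.mp hs)
  have hzero : ∀ s ∈ S j, s ∉ (st.att j).toFinset → st.A s = 0 := by
    intro s hsS hsatt
    apply hI.coupZ
    intro j'
    rcases eq_or_ne j' j with rfl | hne
    · exact fun hmem => hsatt (List.mem_toFinset.mpr hmem)
    · intro hmem
      exact (Finset.disjoint_left.mp (hdisj j' j hne) (hI.mem j' s hmem)) hsS
  rw [← Finset.sum_subset hsub hzero]
  rw [List.sum_toFinset _ (hI.nod j), hI.coupM j]
  rfl


/-! ### Accounting -/

lemma inv_SA_cap (hC : 1 ≤ C) (hcard : ∀ j : Fin N, 8*C ≤ (S j).card)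
    (hdisj : ∀ i j : Fin N, i ≠ j → Disjoint (S i) (S j))
    {st : GSt α N} {bob : BobState α} (hI : Inv C S st bob) (j : Fin N) :
    ∑ s ∈ S j, st.A s ≤ 1/2 := by
  have hc : 0 < 8*C := by omega
  have hm : 8*C ≤ (S j).card := hcard j
  rw [inv_SA_eq hdisj hI j]
  rcases Nat.eq_zero_or_pos (st.att j).length with h0 | hn
  · rw [h0]
    simp
  · calc ∑ i ∈ Finset.range (st.att j).length, stk (8*C) ((S j).card) i
        ≤ 4 * 2 ^ (((st.att j).length - 1) / qq (8*C) ((S j).card)) / 2 ^ (8*C + 2) :=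
          sum_stk_le hc hm hn
      _ ≤ 4 * 2 ^ (8*C - 1) / 2 ^ (8*C + 2) := by
          gcongr
          · norm_num
          · exact lvl_cap hc hm (inv_len_le hI j)
      _ = 1/2 := cap_half (by omega)

lemma inv_SA_fin (hC : 1 ≤ C) (hcard : ∀ j : Fin N, 8*C ≤ (S j).card)
    (hdisj : ∀ i j : Fin N, i ≠ j → Disjoint (S i) (S j))
    {st : GSt α N} {bob : BobState α} (hI : Inv C S st bob) {j : Fin N}
    (hfin : finP C S st bob j) (hBnn : ∀ s, 0 ≤ bob.1 s) :
    ∑ s ∈ S j, st.A s ≤ (1/2) * ∑ s ∈ S j, bob.1 s := by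
  have hc : 0 < 8*C := by omega
  have hm : 8*C ≤ (S j).card := hcard j
  have hm0 : (0:ℚ) < ((S j).card : ℚ) := by
    have : 0 < (S j).card := by omega
    exact_mod_cast this
  have hBs : (0:ℚ) ≤ ∑ s ∈ S j, bob.1 s := Finset.sum_nonneg (fun s _ => hBnn s)
  rw [inv_SA_eq hdisj hI j]
  rcases Nat.eq_zero_or_pos (st.att j).length with h0 | hn
  · rw [h0]
    simp
    linarith
  · set n := (st.att j).length with hn'
    set m := (S j).card with hm'
    set L := (n - 1) / qq (8*C) m with hL
    have h1 : ∑ i ∈ Finset.range n, stk (8*C) m i ≤ 4 * 2 ^ L / 2 ^ (8*C + 2) :=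
      sum_stk_le hc hm hn
    have h2 : ((m:ℚ)) * stk (8*C) m (n - 1) < (C:ℚ) * ∑ s ∈ S j, bob.1 s := hfin
    have h3 : ((m:ℚ)) * stk (8*C) m (n - 1) = (8*C : ℚ) * 2 ^ L / 2 ^ (8*C + 2) := by
      unfold stk
      rw [← hL]
      field_simp
      push_cast
      ring
    rw [h3] at h2
    have hCq : (0:ℚ) < (C:ℚ) := by exact_mod_cast hC
    have hX : (0:ℚ) < (2:ℚ) ^ L := by positivity
    have hP : (0:ℚ) < (2:ℚ) ^ (8*C+2) := by positivity
    -- from h2 : 8C·X/P < C·ΣB, so X/P < ΣB/(8C), hence 4X/P < ΣB/2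
    have hcast : ((8*C : ℕ) : ℚ) = 8 * (C:ℚ) := by push_cast; ring
    have h4 : 4 * (2:ℚ) ^ L / 2 ^ (8*C+2) ≤ (1/2) * ∑ s ∈ S j, bob.1 s := by
      rw [div_lt_iff₀ hP] at h2
      rw [div_le_iff₀ hP]
      nlinarith [h2, hCq, hX, hP]
    calc ∑ i ∈ Finset.range n, stk (8*C) m i ≤ 4 * 2 ^ L / 2 ^ (8*C + 2) := h1
      _ ≤ (1/2) * ∑ s ∈ S j, bob.1 s := h4

lemma sum_SU (hdisj : ∀ i j : Fin N, i ≠ j → Disjoint (S i) (S j)) (f : α → ℚ) :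
    ∑ s ∈ SU S, f s = ∑ j : Fin N, ∑ s ∈ S j, f s := by
  apply Finset.sum_biUnion
  intro i _ j _ hne
  exact hdisj i j hne

lemma exists_unfinished (hC : 1 ≤ C) (hN : 2 ^ (8*C) ≤ N)
    (hcard : ∀ j : Fin N, 8*C ≤ (S j).card)
    (hdisj : ∀ i j : Fin N, i ≠ j → Disjoint (S i) (S j))
    {st : GSt α N} {bob : BobState α}
    (hBnn : ∀ s, 0 ≤ bob.1 s) (hBsum : ∑ s ∈ SU S, bob.1 s ≤ 1) :
    (Tset C S st bob).Nonempty := by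
  classical
  by_contra hno
  have hall : ∀ j : Fin N, finP C S st bob j := by
    intro j
    by_contra hnf
    apply hno
    refine ⟨j, ?_⟩
    unfold Tset
    simp [hnf]
  have hCq : (0:ℚ) < (C:ℚ) := by exact_mod_cast hC
  have hP : (0:ℚ) < (2:ℚ) ^ (8*C+2) := by positivity
  have hone : ∀ j : Fin N, 8 / (2:ℚ)^(8*C+2) < ∑ s ∈ S j, bob.1 s := by
    intro j
    have hfin := hall j
    unfold finP at hfin
    have hm0 : (0:ℚ) < ((S j).card : ℚ) := by
      have h1 : 0 < (S j).card := by have := hcard j; omega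
      exact_mod_cast h1
    have hge : ((8*C:ℕ):ℚ) / 2^(8*C+2) ≤ ((S j).card:ℚ) * stk (8*C) ((S j).card) ((st.att j).length - 1) := by
      have := stk_ge (c := 8*C) (m := (S j).card) ((st.att j).length - 1)
      calc ((8*C:ℕ):ℚ) / 2^(8*C+2)
          = ((S j).card:ℚ) * ((((8*C:ℕ):ℚ)/((S j).card:ℚ)) / 2^(8*C+2)) := by
            field_simp
        _ ≤ ((S j).card:ℚ) * stk (8*C) ((S j).card) ((st.att j).length - 1) := by
            apply mul_le_mul_of_nonneg_left this (le_of_lt hm0)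
    have h2 : ((8*C:ℕ):ℚ) / 2^(8*C+2) < (C:ℚ) * ∑ s ∈ S j, bob.1 s := lt_of_le_of_lt hge hfin
    have hcast : ((8*C:ℕ):ℚ) = 8 * (C:ℚ) := by push_cast; ring
    rw [hcast] at h2
    rw [div_lt_iff₀ hP] at h2 ⊢
    nlinarith [h2, hCq]
  have hNpos : 0 < N := by
    have : 0 < 2^(8*C) := Nat.pow_pos (by norm_num)
    omega
  have hne : (Finset.univ : Finset (Fin N)).Nonempty := ⟨⟨0, hNpos⟩, Finset.mem_univ _⟩
  have hsum : (N:ℚ) * (8 / 2^(8*C+2)) < ∑ j : Fin N, ∑ s ∈ S j, bob.1 s := by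
    have hconst : (N:ℚ) * (8 / 2^(8*C+2)) = ∑ _j : Fin N, (8:ℚ) / 2^(8*C+2) := by
      rw [Finset.sum_const, Finset.card_univ, Fintype.card_fin, nsmul_eq_mul]
    rw [hconst]
    exact Finset.sum_lt_sum_of_nonempty hne (fun j _ => hone j)
  have h2N : (2:ℚ) ≤ (N:ℚ) * (8 / 2^(8*C+2)) := by
    have hNq : ((2:ℚ))^(8*C) ≤ (N:ℚ) := by exact_mod_cast hN
    have hpow : (0:ℚ) < (2:ℚ)^(8*C) := by positivity
    have hPe : (2:ℚ)^(8*C+2) = 2^(8*C)*4 := by rw [pow_add]; norm_num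
    rw [hPe]
    have hdiv : (8:ℚ)/((2:ℚ)^(8*C)*4) = 2/2^(8*C) := by
      field_simp
      ring
    rw [hdiv]
    calc (2:ℚ) = 2^(8*C) * (2/2^(8*C)) := by field_simp
      _ ≤ (N:ℚ) * (2/2^(8*C)) := by
          apply mul_le_mul_of_nonneg_right hNq (by positivity)
  have hfinal : ∑ j : Fin N, ∑ s ∈ S j, bob.1 s ≤ 1 := by
    rw [← sum_SU hdisj]
    exact hBsum
  linarith

lemma inv_budget (hC : 1 ≤ C) (hN : 2 ^ (8*C) ≤ N)
    (hcard : ∀ j : Fin N, 8*C ≤ (S j).card)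
    (hdisj : ∀ i j : Fin N, i ≠ j → Disjoint (S i) (S j))
    {st : GSt α N} {bob : BobState α} (hI : Inv C S st bob)
    (hBnn : ∀ s, 0 ≤ bob.1 s) (hBsum : ∑ s ∈ SU S, bob.1 s ≤ 1) :
    ∑ s ∈ SU S, st.A s ≤ 1 := by
  rw [sum_SU hdisj]
  have hB := sum_SU hdisj bob.1
  have hBj : ∀ j : Fin N, (0:ℚ) ≤ ∑ s ∈ S j, bob.1 s :=
    fun j => Finset.sum_nonneg (fun s _ => hBnn s)
  by_cases hex : ∃ j₀ : Fin N, st.att j₀ ≠ [] ∧ ¬ finP C S st bob j₀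
  · obtain ⟨j₀, hne₀, hnf₀⟩ := hex
    have huniq : ∀ j : Fin N, j ≠ j₀ → ∑ s ∈ S j, st.A s ≤ (1/2) * ∑ s ∈ S j, bob.1 s := by
      intro j hne
      by_cases hstk : st.att j = []
      · rw [inv_SA_eq hdisj hI j, hstk]
        simp
        linarith [hBj j]
      · have hfin : finP C S st bob j := by
          by_contra hnf
          rcases lt_or_gt_of_ne hne with hlt | hgt
          · exact absurd (hI.ord j₀ hne₀ j hlt) hnf
          · exact absurd (hI.ord j hstk j₀ hgt) hnf₀
        exact inv_SA_fin hC hcard hdisj hI hfin hBnn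
    have hsplit := Finset.add_sum_erase Finset.univ (fun j => ∑ s ∈ S j, st.A s)
      (Finset.mem_univ j₀)
    rw [← hsplit]
    have hcap := inv_SA_cap hC hcard hdisj hI j₀
    have herase : ∑ j ∈ Finset.univ.erase j₀, ∑ s ∈ S j, st.A s
        ≤ ∑ j ∈ Finset.univ.erase j₀, (1/2) * ∑ s ∈ S j, bob.1 s := by
      apply Finset.sum_le_sum
      intro j hj
      exact huniq j (Finset.ne_of_mem_erase hj)
    have herase2 : ∑ j ∈ Finset.univ.erase j₀, (1/2) * ∑ s ∈ S j, bob.1 s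
        ≤ (1/2) * ∑ j : Fin N, ∑ s ∈ S j, bob.1 s := by
      rw [← Finset.mul_sum]
      apply mul_le_mul_of_nonneg_left _ (by norm_num)
      apply Finset.sum_le_sum_of_subset_of_nonneg (Finset.erase_subset _ _)
      intro j _ _
      exact hBj j
    have : ∑ j : Fin N, ∑ s ∈ S j, bob.1 s ≤ 1 := by rw [← hB]; exact hBsum
    linarith
  · push_neg at hex
    have hall : ∀ j : Fin N, ∑ s ∈ S j, st.A s ≤ (1/2) * ∑ s ∈ S j, bob.1 s := by
      intro j
      by_cases hstk : st.att j = []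
      · rw [inv_SA_eq hdisj hI j, hstk]
        simp
        linarith [hBj j]
      · exact inv_SA_fin hC hcard hdisj hI (hex j hstk) hBnn
    calc ∑ j : Fin N, ∑ s ∈ S j, st.A s ≤ ∑ j : Fin N, (1/2) * ∑ s ∈ S j, bob.1 s :=
          Finset.sum_le_sum (fun j _ => hall j)
      _ = (1/2) * ∑ j : Fin N, ∑ s ∈ S j, bob.1 s := by rw [Finset.mul_sum]
      _ ≤ (1/2) * 1 := by
          apply mul_le_mul_of_nonneg_left _ (by norm_num)
          rw [← hB]
          exact hBsum
      _ ≤ 1 := by norm_num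


/-! ### The run against a fixed Bob strategy -/

variable (C) (S) (τ : BStrat α)

/-- Bob's state *before* Alice's move of round `k`. -/
noncomputable def bseq : ℕ → BobState α
  | 0 => ((fun _ => (0:ℚ)), (∅ : Set α))
  | (k+1) => bmove (alice C S) τ k

/-- Alice's bookkeeping state after her move of round `k`. -/
noncomputable def Rst : ℕ → GSt α N
  | 0 => stepF C S (st0 α N) (bseq C S τ 0)
  | (k+1) => stepF C S (Rst k) (bseq C S τ (k+1))

lemma ghist_snd (k : ℕ) :
    (ghist (alice C S) τ k).map Prod.snd = (List.range k).map (bmove (alice C S) τ) := by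
  induction k with
  | zero => simp [ghist]
  | succ k ih =>
      have hsucc : ghist (alice C S) τ (k+1)
          = ghist (alice C S) τ k ++ [(amove (alice C S) τ k, bmove (alice C S) τ k)] := rfl
      rw [hsucc, List.map_append, ih, List.range_succ, List.map_append]
      rfl

lemma amove_eq (k : ℕ) : amove (alice C S) τ k = (Rst C S τ k).A := by
  have key : ∀ k, List.foldl (stepF C S) (st0 α N)
      ((bseq C S τ 0) :: (List.range k).map (bmove (alice C S) τ)) = Rst C S τ k := by
    intro k
    induction k with
    | zero => rfl
    | succ k ih =>
        rw [List.range_succ, List.map_append, ← List.cons_append, List.foldl_append, ih]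
        rfl
  show alice C S ((ghist (alice C S) τ k).map Prod.snd) = _
  rw [ghist_snd]
  exact congrArg GSt.A (key k)

/-- Abbreviations matching `AliceWins`. -/
noncomputable def Bf : ℕ → α → ℚ := fun k => (bmove (alice C S) τ k).1
noncomputable def Df : ℕ → Set α := fun k => (bmove (alice C S) τ k).2

lemma bseq_succ_fst (k : ℕ) : (bseq C S τ (k+1)).1 = Bf C S τ k := rfl
lemma bseq_succ_snd (k : ℕ) : (bseq C S τ (k+1)).2 = Df C S τ k := rfl

lemma bseq_prev (k : ℕ) :
    (if k = 0 then (0 : α → ℚ) else Bf C S τ (k - 1)) = (bseq C S τ k).1 := by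
  cases k with
  | zero => rfl
  | succ k => rfl

lemma bseq_prevD (k : ℕ) :
    (if k = 0 then (∅ : Set α) else Df C S τ (k - 1)) = (bseq C S τ k).2 := by
  cases k with
  | zero => rfl
  | succ k => rfl

lemma bseq_mono (k : ℕ) (hleg : BobLegal S (Bf C S τ) (Df C S τ) k) :
    ∀ s, (bseq C S τ k).1 s ≤ (bseq C S τ (k+1)).1 s := by
  intro s
  have h := hleg.1 s
  rw [bseq_prev] at h
  exact h

lemma bseq_Dmono (k : ℕ) (hleg : BobLegal S (Bf C S τ) (Df C S τ) k) :
    (bseq C S τ k).2 ⊆ (bseq C S τ (k+1)).2 := by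
  have h := hleg.2.2.2.2.1
  rw [bseq_prevD] at h
  exact h

lemma bseq_nonneg (k : ℕ) (hleg : ∀ i, i < k → BobLegal S (Bf C S τ) (Df C S τ) i) :
    ∀ s, 0 ≤ (bseq C S τ k).1 s := by
  induction k with
  | zero => intro s; exact le_refl 0
  | succ k ih =>
      intro s
      have h1 := ih (fun i hi => hleg i (by omega)) s
      have h2 := bseq_mono C S τ k (hleg k (by omega)) s
      linarith

lemma bseq_sum_le (k : ℕ) (hleg : ∀ i, i < k → BobLegal S (Bf C S τ) (Df C S τ) i) :
    ∑ s ∈ SU S, (bseq C S τ k).1 s ≤ 1 := by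
  cases k with
  | zero =>
      simp [bseq]
  | succ k =>
      exact (hleg k (by omega)).2.2.1

variable {C} {S} {τ}
variable (hC : 1 ≤ C) (hN : 2 ^ (8*C) ≤ N)
  (hdisj : ∀ i j : Fin N, i ≠ j → Disjoint (S i) (S j))
  (hcard : ∀ j : Fin N, 8*C ≤ (S j).card)

include hdisj in
lemma run_inv (k : ℕ) (hleg : ∀ i, i < k → BobLegal S (Bf C S τ) (Df C S τ) i) :
    Inv C S (Rst C S τ k) (bseq C S τ k) := by
  induction k with
  | zero =>
      exact inv_step hdisj inv_st0 (fun s => le_refl _) (subset_refl _)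
  | succ k ih =>
      exact inv_step hdisj (ih (fun i hi => hleg i (by omega)))
        (bseq_mono C S τ k (hleg k (by omega)))
        (bseq_Dmono C S τ k (hleg k (by omega)))

include hC hN hdisj hcard in
lemma run_alice_legal (k : ℕ) (hleg : ∀ i, i < k → BobLegal S (Bf C S τ) (Df C S τ) i) :
    AliceLegal S (amove (alice C S) τ) k := by
  have hIk := run_inv hdisj k hleg
  refine ⟨?_, ?_, ?_, ?_⟩
  · -- monotone
    intro s
    show (if k = 0 then (0 : α → ℚ) else amove (alice C S) τ (k-1)) s ≤ _
    cases k with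
    | zero =>
        simp only [if_pos rfl]
        rw [amove_eq]
        have h := stepA_mono (C := C) (bob' := bseq C S τ 0) hdisj (inv_st0 (C := C)) s
        simpa [st0, Rst] using h
    | succ k =>
        simp only [Nat.succ_ne_zero, if_neg, Nat.add_sub_cancel]
        rw [amove_eq, amove_eq]
        show (Rst C S τ k).A s ≤ (stepF C S (Rst C S τ k) (bseq C S τ (k+1))).A s
        exact stepA_mono hdisj (run_inv hdisj k (fun i hi => hleg i (by omega))) s
  · -- finitely many changes
    cases k with
    | zero =>
        apply Set.Finite.subset (stepA_diff (C := C) (S := S) (st := st0 α N)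
          (bob' := bseq C S τ 0))
        intro s hs
        simp only [Set.mem_setOf_eq] at hs ⊢
        rw [amove_eq] at hs
        simpa [st0, Rst] using hs
    | succ k =>
        apply Set.Finite.subset (stepA_diff (C := C) (S := S) (st := Rst C S τ k)
          (bob' := bseq C S τ (k+1)))
        intro s hs
        simp only [Set.mem_setOf_eq] at hs ⊢
        rw [amove_eq, amove_eq] at hs
        simpa [Rst] using hs
  · -- support
    intro s hs
    rw [amove_eq]
    exact inv_support hIk s hs
  · -- total at most one
    have hsum := bseq_sum_le C S τ k hleg
    have hnn := bseq_nonneg C S τ k hleg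
    have := inv_budget hC hN hcard hdisj hIk hnn hsum
    calc ∑ s ∈ SU S, amove (alice C S) τ k s = ∑ s ∈ SU S, (Rst C S τ k).A s := by
          apply Finset.sum_congr rfl
          intro s _
          rw [amove_eq]
      _ ≤ 1 := this


/-! ### Stabilization -/

lemma nat_stab {f : ℕ → ℕ} {b : ℕ} (hmono : ∀ n, f n ≤ f (n+1)) (hb : ∀ n, f n ≤ b) :
    ∃ K, ∀ n, K ≤ n → f n = f K := by
  by_contra h
  push_neg at h
  have hmono' : Monotone f := monotone_nat_of_le_succ hmono
  have grow : ∀ K, ∃ n, f K < f n := by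
    intro K
    obtain ⟨n, hn, hne⟩ := h K
    exact ⟨n, lt_of_le_of_ne (hmono' hn) (Ne.symm hne)⟩
  have key : ∀ i, ∃ n, i ≤ f n := by
    intro i
    induction i with
    | zero => exact ⟨0, Nat.zero_le _⟩
    | succ i ih =>
        obtain ⟨n, hn⟩ := ih
        obtain ⟨n', hn'⟩ := grow n
        exact ⟨n', by omega⟩
  obtain ⟨n, hn⟩ := key (b+1)
  have := hb n
  omega

/-- The total number of attempts. -/
noncomputable def Mct (st : GSt α N) : ℕ := ∑ j : Fin N, (st.att j).length

lemma step_M {st : GSt α N} {bob : BobState α} :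
    stepF C S st bob = st ∨ Mct (stepF C S st bob) = Mct st + 1 := by
  rcases step_cases C S st bob with heq | ⟨j, s₀, _, _, _, _, _, _, heq⟩
  · exact Or.inl heq
  · right
    rw [heq]
    unfold Mct
    have h1 := Finset.add_sum_erase Finset.univ
      (fun j' => ((Function.update st.att j (st.att j ++ [s₀]) : Fin N → List α) j').length)
      (Finset.mem_univ j)
    have h2 := Finset.add_sum_erase Finset.univ (fun j' => (st.att j').length)
      (Finset.mem_univ j)
    rw [← h1, ← h2]
    have h3 : ∑ j' ∈ Finset.univ.erase j,
        ((Function.update st.att j (st.att j ++ [s₀]) : Fin N → List α) j').length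
        = ∑ j' ∈ Finset.univ.erase j, (st.att j').length := by
      apply Finset.sum_congr rfl
      intro j' hj'
      rw [Function.update_of_ne (Finset.ne_of_mem_erase hj')]
    rw [h3]
    simp [Function.update_self]
    omega

lemma step_M_mono {st : GSt α N} {bob : BobState α} :
    Mct st ≤ Mct (stepF C S st bob) := by
  rcases step_M (C := C) (S := S) (st := st) (bob := bob) with h | h
  · rw [h]
  · omega

lemma eq_of_M_eq {st : GSt α N} {bob : BobState α}
    (h : Mct (stepF C S st bob) = Mct st) : stepF C S st bob = st := by
  rcases step_M (C := C) (S := S) (st := st) (bob := bob) with h' | h'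
  · exact h'
  · omega

include hdisj in
lemma state_stab (hall : ∀ k, BobLegal S (Bf C S τ) (Df C S τ) k) :
    ∃ K, ∀ k, K ≤ k → Rst C S τ k = Rst C S τ K := by
  have hIk : ∀ k, Inv C S (Rst C S τ k) (bseq C S τ k) :=
    fun k => run_inv hdisj k (fun i _ => hall i)
  have hmono : ∀ k, Mct (Rst C S τ k) ≤ Mct (Rst C S τ (k+1)) := by
    intro k
    exact step_M_mono
  have hbd : ∀ k, Mct (Rst C S τ k) ≤ ∑ j : Fin N, (S j).card := by
    intro k
    exact Finset.sum_le_sum (fun j _ => inv_len_le (hIk k) j)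
  obtain ⟨K, hK⟩ := nat_stab hmono hbd
  refine ⟨K, ?_⟩
  intro k hk
  induction k with
  | zero =>
      have : K = 0 := by omega
      rw [this]
  | succ k ih =>
      rcases Nat.lt_or_ge K (k+1) with hlt | hge
      · have hk' : K ≤ k := by omega
        have hek := ih hk'
        have hMk : Mct (Rst C S τ (k+1)) = Mct (Rst C S τ k) := by
          rw [hK (k+1) hk, hK k hk']
        have : Rst C S τ (k+1) = Rst C S τ k := by
          show stepF C S (Rst C S τ k) (bseq C S τ (k+1)) = Rst C S τ k
          apply eq_of_M_eq
          exact hMk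
        rw [this, hek]
      · have : K = k+1 := by omega
        rw [this]

lemma min'_eq_of_eq {β : Type} [LinearOrder β] {s t : Finset β} (h : s = t) (hs : s.Nonempty) :
    s.min' hs = t.min' (h ▸ hs) := by
  subst h
  rfl

lemma Tset_antitone {st : GSt α N} {bob bob' : BobState α}
    (hB : ∀ s, bob.1 s ≤ bob'.1 s) : Tset C S st bob' ⊆ Tset C S st bob := by
  classical
  intro j hj
  unfold Tset at hj ⊢
  simp only [Finset.mem_filter, Finset.mem_univ, true_and] at hj ⊢
  intro hfin
  exact hj (finP_mono C S st hB hfin)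

lemma bseq_mono_le (k k' : ℕ) (hkk : k ≤ k')
    (hall : ∀ i, BobLegal S (Bf C S τ) (Df C S τ) i) :
    ∀ s, (bseq C S τ k).1 s ≤ (bseq C S τ k').1 s := by
  induction k' with
  | zero =>
      have : k = 0 := by omega
      rw [this]
      exact fun s => le_refl _
  | succ k' ih =>
      rcases Nat.lt_or_ge k (k'+1) with hlt | hge
      · intro s
        have h1 := ih (by omega) s
        have h2 := bseq_mono C S τ k' (hall k') s
        linarith
      · have : k = k'+1 := by omega
        rw [this]
        exact fun s => le_refl _


lemma list_death {β : Type} (D : ℕ → Set β) (hmono : ∀ a b, a ≤ b → D a ⊆ D b)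
    (l : List β) (h : ∀ s ∈ l, ∃ k, s ∈ D k) : ∃ K, ∀ s ∈ l, s ∈ D K := by
  induction l with
  | nil => exact ⟨0, by simp⟩
  | cons a l ih =>
      obtain ⟨k₁, hk₁⟩ := h a List.mem_cons_self
      obtain ⟨K, hK⟩ := ih (fun s hs => h s (List.mem_cons_of_mem _ hs))
      refine ⟨max k₁ K, ?_⟩
      intro s hs
      rcases List.mem_cons.mp hs with rfl | hs'
      · exact hmono k₁ (max k₁ K) (le_max_left _ _) hk₁
      · exact hmono K (max k₁ K) (le_max_right _ _) (hK s hs')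

include hC hN hdisj hcard in
lemma limit_win (hall : ∀ k, BobLegal S (Bf C S τ) (Df C S τ) k) :
    AliceLimitWin C (amove (alice C S) τ) (Bf C S τ) (Df C S τ) := by
  classical
  have hIk : ∀ k, Inv C S (Rst C S τ k) (bseq C S τ k) :=
    fun k => run_inv hdisj k (fun i _ => hall i)
  have hnn : ∀ k, ∀ s, 0 ≤ (bseq C S τ k).1 s :=
    fun k => bseq_nonneg C S τ k (fun i _ => hall i)
  have hsum : ∀ k, ∑ s ∈ SU S, (bseq C S τ k).1 s ≤ 1 :=
    fun k => bseq_sum_le C S τ k (fun i _ => hall i)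
  obtain ⟨K₀, hK₀⟩ := state_stab hdisj hall
  have hTne : ∀ k, (Tset C S (Rst C S τ K₀) (bseq C S τ k)).Nonempty :=
    fun k => exists_unfinished hC hN hcard hdisj (hnn k) (hsum k)
  have hTsub' : ∀ a b, a ≤ b → Tset C S (Rst C S τ K₀) (bseq C S τ b)
      ⊆ Tset C S (Rst C S τ K₀) (bseq C S τ a) := by
    intro a b hab
    induction b with
    | zero =>
        have : a = 0 := by omega
        rw [this]
    | succ b ih =>
        rcases Nat.lt_or_ge a (b+1) with hlt | hge
        · exact subset_trans (Tset_antitone (bseq_mono C S τ b (hall b))) (ih (by omega))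
        · have : a = b+1 := by omega
          rw [this]
  have hTmono : ∀ k, N - (Tset C S (Rst C S τ K₀) (bseq C S τ k)).card
      ≤ N - (Tset C S (Rst C S τ K₀) (bseq C S τ (k+1))).card := by
    intro k
    have h1 := Finset.card_le_card (hTsub' k (k+1) (by omega))
    omega
  obtain ⟨K₁', hK₁'⟩ := nat_stab hTmono (fun k => Nat.sub_le _ _)
  set K₁ := max K₀ K₁' with hK₁def
  have hcardle : ∀ k, (Tset C S (Rst C S τ K₀) (bseq C S τ k)).card ≤ N := by
    intro k
    calc (Tset C S (Rst C S τ K₀) (bseq C S τ k)).card ≤ (Finset.univ : Finset (Fin N)).card :=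
          Finset.card_le_univ _
      _ = N := by rw [Finset.card_univ, Fintype.card_fin]
  have hTeq : ∀ k, K₁ ≤ k → Tset C S (Rst C S τ K₀) (bseq C S τ k)
      = Tset C S (Rst C S τ K₀) (bseq C S τ K₁) := by
    intro k hk
    have hsub := hTsub' K₁ k hk
    have hc1 := hK₁' k (le_trans (le_max_right _ _) hk)
    have hc2 := hK₁' K₁ (le_max_right _ _)
    have hle1 := hcardle k
    have hle2 := hcardle K₁
    apply Finset.eq_of_subset_of_card_le hsub
    omega
  set j' := (Tset C S (Rst C S τ K₀) (bseq C S τ K₁)).min' (hTne K₁) with hj'def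
  -- the keep-branch witness
  have hkeepw : ∀ k, K₁ ≤ k → ∃ s ∈ (Rst C S τ K₀).att j', s ∉ (bseq C S τ (k+1)).2 := by
    intro k hk
    have hK₀k : K₀ ≤ k := le_trans (le_max_left _ _) hk
    have hstep : stepF C S (Rst C S τ K₀) (bseq C S τ (k+1)) = Rst C S τ K₀ := by
      have h1 : Rst C S τ (k+1) = stepF C S (Rst C S τ k) (bseq C S τ (k+1)) := rfl
      rw [hK₀ k hK₀k] at h1
      rw [← h1]
      exact hK₀ (k+1) (by omega)
    have halive : ∀ j : Fin N, ∃ s ∈ S j, s ∉ (bseq C S τ (k+1)).2 :=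
      (hall k).2.2.2.2.2
    have h := step_keep C S (Rst C S τ K₀) (bseq C S τ (k+1)) (hTne (k+1)) halive hstep
    have hmin : (Tset C S (Rst C S τ K₀) (bseq C S τ (k+1))).min' (hTne (k+1)) = j' := by
      rw [min'_eq_of_eq (hTeq (k+1) (by omega)) (hTne (k+1))]
    rw [hmin] at h
    exact h
  -- D is monotone
  have hDle : ∀ a b, a ≤ b → (bseq C S τ a).2 ⊆ (bseq C S τ b).2 := by
    intro a b hab
    induction b with
    | zero =>
        have : a = 0 := by omega
        rw [this]
    | succ b ih =>
        rcases Nat.lt_or_ge a (b+1) with hlt | hge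
        · exact subset_trans (ih (by omega)) (bseq_Dmono C S τ b (hall b))
        · have : a = b+1 := by omega
          rw [this]
  -- the eternal element
  have hLne : (Rst C S τ K₀).att j' ≠ [] := by
    obtain ⟨s, hs, _⟩ := hkeepw K₁ le_rfl
    exact List.ne_nil_of_mem hs
  have hex : ∃ s ∈ (Rst C S τ K₀).att j', ∀ k, s ∉ (bseq C S τ k).2 := by
    by_contra hno
    push_neg at hno
    obtain ⟨Kd, hKd⟩ := list_death (fun k => (bseq C S τ k).2) hDle _ hno
    obtain ⟨s, hsL, hsAlive⟩ := hkeepw (max K₁ Kd) (le_max_left _ _)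
    exact hsAlive (hDle Kd (max K₁ Kd + 1) (by omega) (hKd s hsL))
  obtain ⟨sw, hsL, hsAlive⟩ := hex
  -- sw is the last attempt
  have hlast : sw = ((Rst C S τ K₀).att j').getLast hLne := by
    have hsplit := List.dropLast_append_getLast hLne
    have hmem : sw ∈ ((Rst C S τ K₀).att j').dropLast
        ∨ sw ∈ [((Rst C S τ K₀).att j').getLast hLne] := by
      rw [← List.mem_append, hsplit]
      exact hsL
    rcases hmem with h | h
    · exfalso
      have hdead := (hIk (K₀+1)).dead j' sw
      rw [hK₀ (K₀+1) (by omega)] at hdead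
      exact hsAlive (K₀+1) (hdead h)
    · simpa using h
  set σs := stk (8*C) ((S j').card) (((Rst C S τ K₀).att j').length - 1) with hσdef
  have hval : (Rst C S τ K₀).A sw = σs := by
    rw [hlast]
    exact inv_coupL (hIk K₀) j' hLne
  have hsS : sw ∈ S j' := (hIk K₀).mem j' sw hsL
  have hsSU : sw ∈ SU S := Finset.mem_biUnion.mpr ⟨j', Finset.mem_univ _, hsS⟩
  have hm0 : (0:ℚ) < ((S j').card : ℚ) := by
    have h1 : 0 < (S j').card := by have := hcard j'; omega
    exact_mod_cast h1
  -- Bob's weight is forever bounded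
  have hKbig : ∀ k, K₁ ≤ k → (C:ℚ) * Bf C S τ k sw ≤ σs := by
    intro k hk
    have hjT : j' ∈ Tset C S (Rst C S τ K₀) (bseq C S τ (k+1)) := by
      rw [hTeq (k+1) (by omega)]
      exact Finset.min'_mem _ _
    have hnf : ¬ finP C S (Rst C S τ K₀) (bseq C S τ (k+1)) j' := by
      unfold Tset at hjT
      simp only [Finset.mem_filter, Finset.mem_univ, true_and] at hjT
      exact hjT
    unfold finP at hnf
    rw [not_lt] at hnf
    have hfair := (hall k).2.2.2.1 j'
    have hsum2 : ∑ t ∈ S j', (bseq C S τ (k+1)).1 t = ((S j').card : ℚ) * Bf C S τ k sw := by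
      have : ∀ t ∈ S j', (bseq C S τ (k+1)).1 t = Bf C S τ k sw :=
        fun t ht => hfair t ht sw hsS
      rw [Finset.sum_congr rfl this, Finset.sum_const, nsmul_eq_mul]
    rw [hsum2] at hnf
    have hcalc : ((S j').card : ℚ) * ((C:ℚ) * Bf C S τ k sw)
        ≤ ((S j').card : ℚ) * σs := by
      calc ((S j').card : ℚ) * ((C:ℚ) * Bf C S τ k sw)
          = (C:ℚ) * (((S j').card : ℚ) * Bf C S τ k sw) := by ring
        _ ≤ ((S j').card : ℚ) * σs := hnf
    exact le_of_mul_le_mul_left hcalc hm0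
  have hBle : ∀ k, (C:ℚ) * Bf C S τ k sw ≤ σs := by
    intro k
    rcases le_or_gt K₁ k with hk | hk
    · exact hKbig k hk
    · have h1 : Bf C S τ k sw ≤ Bf C S τ K₁ sw :=
        bseq_mono_le (k+1) (K₁+1) (by omega) hall sw
      have h2 := hKbig K₁ le_rfl
      have hCq : (0:ℚ) ≤ (C:ℚ) := by positivity
      nlinarith [h1, h2, hCq]
  -- Alice's weight
  have hALL : ∀ k, AliceLegal S (amove (alice C S) τ) k :=
    fun k => run_alice_legal hC hN hdisj hcard k (fun i _ => hall i)
  have hAnn : ∀ k, ∀ s, 0 ≤ amove (alice C S) τ k s := by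
    intro k
    induction k with
    | zero =>
        intro s
        have h := (hALL 0).1 s
        simpa using h
    | succ k ih =>
        intro s
        have h := (hALL (k+1)).1 s
        simp only [Nat.succ_ne_zero, if_false, Nat.add_sub_cancel] at h
        exact le_trans (ih s) h
  have hA1 : ∀ k, amove (alice C S) τ k sw ≤ 1 := by
    intro k
    have h4 := (hALL k).2.2.2
    have h5 := Finset.single_le_sum (f := amove (alice C S) τ k)
      (fun s _ => hAnn k s) hsSU
    linarith
  have hAval : amove (alice C S) τ K₀ sw = σs := by
    rw [amove_eq]
    exact hval
  -- conclude
  refine ⟨sw, ?_, ?_⟩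
  · intro k
    exact hsAlive (k+1)
  · have hCpos : (0:ℝ) < (C:ℝ) := by
      have : 0 < C := hC
      exact_mod_cast this
    have hBsup : (⨆ k, ((Bf C S τ k sw : ℝ))) ≤ ((σs : ℚ) : ℝ)/(C:ℝ) := by
      apply ciSup_le
      intro k
      rw [le_div_iff₀ hCpos]
      have h' : ((C:ℚ):ℝ) * ((Bf C S τ k sw : ℚ) : ℝ) ≤ ((σs : ℚ) : ℝ) := by
        exact_mod_cast hBle k
      push_cast at h' ⊢
      linarith
    have hAsup : ((σs : ℚ) : ℝ) ≤ ⨆ k, ((amove (alice C S) τ k sw : ℝ)) := by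
      apply le_ciSup_of_le ?_ K₀
      · rw [hAval]
      · refine ⟨1, ?_⟩
        rintro x ⟨k, rfl⟩
        show ((amove (alice C S) τ k sw : ℚ) : ℝ) ≤ 1
        exact_mod_cast hA1 k
    calc (C:ℝ) * (⨆ k, ((Bf C S τ k sw : ℝ)))
        ≤ (C:ℝ) * (((σs : ℚ) : ℝ)/(C:ℝ)) := by
          apply mul_le_mul_of_nonneg_left hBsup (le_of_lt hCpos)
      _ = ((σs : ℚ) : ℝ) := by field_simp
      _ ≤ ⨆ k, ((amove (alice C S) τ k sw : ℝ)) := hAsup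

end Stmt16

/-- If `C ≥ 1`, `N ≥ 2^(8C)`, and `S_1, …, S_N` are pairwise disjoint
finite sets each of size at least `8C`, then Alice has a winning strategy in the weight
game on `S = S_1 ∪ … ∪ S_N`. -/
theorem stmt_16 {α : Type} [DecidableEq α] (C N : ℕ) (hC : 1 ≤ C) (hN : 2 ^ (8 * C) ≤ N)
    (S : Fin N → Finset α) (hdisj : ∀ i j : Fin N, i ≠ j → Disjoint (S i) (S j))
    (hcard : ∀ j : Fin N, 8 * C ≤ (S j).card) :
    ∃ σ : AStrat α, ∀ τ : BStrat α, AliceWins C S σ τ := by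
  classical
  refine ⟨Stmt16.alice C S, ?_⟩
  intro τ
  unfold AliceWins
  by_cases hall : ∀ k, BobLegal S (Stmt16.Bf C S τ) (Stmt16.Df C S τ) k
  · refine Or.inr ⟨?_, ?_⟩
    · intro k
      exact ⟨Stmt16.run_alice_legal hC hN hdisj hcard k (fun i _ => hall i), hall k⟩
    · exact Stmt16.limit_win hC hN hdisj hcard hall
  · push_neg at hall
    have hex : ∃ k, ¬ BobLegal S (Stmt16.Bf C S τ) (Stmt16.Df C S τ) k := hall
    refine Or.inl ⟨Nat.find hex, Nat.find_spec hex, ?_⟩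
    intro j hj
    apply Stmt16.run_alice_legal hC hN hdisj hcard j
    intro i hi
    have hik : i < Nat.find hex := lt_of_lt_of_le hi hj
    exact not_not.mp (Nat.find_min hex hik)
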